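/- For all integers m ≥ 0 and 0 ≤ i ≤ m+1, the Boros-Moll coefficients satisfy the recurrence d_i(m+1) = ((m+i)/(m+1)) · d_{i-1}(m) + ((4m+2i+3)/(2(m+1))) · d_i(m), with the convention d_{-1}(m) = 0 and d_{m+1}(m) = 0. -/

import Mathlib

open Finset

noncomputable def d (m : ℕ) (i : ℤ) : ℝ :=
  if 0 ≤ i ∧ i ≤ (m : ℤ) then
    ((2 : ℝ) ^ (2 * m))⁻¹ *
      ∑ k ∈ Finset.Icc i.toNat m,
        2 ^ k * (Nat.choose (2 * m - 2 * k) (m - k) : ℝ) *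
          (Nat.choose (m + k) k : ℝ) * (Nat.choose k i.toNat : ℝ)
  else 0

noncomputable def qq (m k : ℕ) : ℝ :=
  if k ≤ m then
    2 ^ k * (Nat.choose (2 * m - 2 * k) (m - k) : ℝ) * (Nat.choose (m + k) k : ℝ)
  else 0

lemma qq_of_le {m k : ℕ} (h : k ≤ m) :
    qq m k = 2 ^ k * (Nat.choose (2 * m - 2 * k) (m - k) : ℝ) * (Nat.choose (m + k) k : ℝ) :=
  if_pos h

lemma qq_top (m : ℕ) : qq m (m + 1) = 0 := if_neg (by omega)

lemma d_eq (m I : ℕ) :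
    d m (I : ℤ) = ((2 : ℝ) ^ (2 * m))⁻¹ *
      ∑ k ∈ Finset.Icc I m, qq m k * (Nat.choose k I : ℝ) := by
  by_cases h : I ≤ m
  · rw [d, if_pos ⟨by positivity, by exact_mod_cast h⟩]
    congr 1
    refine Finset.sum_congr (by simp) fun k hk => ?_
    simp only [Finset.mem_Icc, Int.toNat_natCast] at hk ⊢
    rw [qq_of_le hk.2]
  · rw [d, if_neg (by push_cast; omega), Finset.Icc_eq_empty (by simp; omega),
      Finset.sum_empty, mul_zero]

lemma central (m : ℕ) : ((m : ℝ) + 1) * qq (m + 1) 0 = 2 * (2 * (m : ℝ) + 1) * qq m 0 := by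
  rw [qq_of_le (Nat.zero_le _), qq_of_le (Nat.zero_le _)]
  have h := congrArg (Nat.cast : ℕ → ℝ) (Nat.succ_mul_centralBinom_succ m)
  simp only [Nat.centralBinom] at h
  have e1 : 2 * (m + 1) - 2 * 0 = 2 * (m + 1) := by omega
  have e2 : (m + 1) - 0 = m + 1 := by omega
  have e3 : 2 * m - 2 * 0 = 2 * m := by omega
  have e4 : m - 0 = m := by omega
  have e5 : (m + 1) + 0 = m + 1 := by omega
  have e6 : m + 0 = m := by omega
  rw [e1, e2, e3, e4, e5, e6]
  push_cast at h ⊢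
  simp only [Nat.choose_zero_right, Nat.cast_one]
  linear_combination h

lemma key (m k : ℕ) (hk : k ≤ m) :
    ((m : ℝ) + 1) * qq (m + 1) (k + 1)
      = 4 * ((m : ℝ) + (k : ℝ) + 1) * qq m k
        + 2 * (2 * (m : ℝ) - 2 * (k : ℝ) - 1) * qq m (k + 1) := by
  rcases eq_or_lt_of_le hk with rfl | hlt
  · -- k = m
    rw [qq_top, qq_of_le (le_refl (k + 1)), qq_of_le (le_refl k)]
    have e1 : 2 * (k + 1) - 2 * (k + 1) = 0 := by omega
    have e2 : (k + 1) - (k + 1) = 0 := by omega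
    have e3 : 2 * k - 2 * k = 0 := by omega
    have e4 : k - k = 0 := by omega
    have e5 : (k + 1) + (k + 1) = 2 * (k + 1) := by omega
    have e6 : k + k = 2 * k := by omega
    rw [e1, e2, e3, e4, e5, e6]
    have h := congrArg (Nat.cast : ℕ → ℝ) (Nat.succ_mul_centralBinom_succ k)
    simp only [Nat.centralBinom] at h
    push_cast at h ⊢
    simp only [Nat.choose_self, Nat.cast_one]
    have hpow : (2 : ℝ) ^ (k + 1) = 2 * 2 ^ k := by rw [pow_succ]; ring
    rw [hpow]
    linear_combination (2 * (2:ℝ) ^ k) * h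
  · -- k < m
    obtain ⟨p, rfl⟩ : ∃ p, m = k + p + 1 := ⟨m - k - 1, by omega⟩
    rw [qq_of_le (by omega), qq_of_le (by omega), qq_of_le (by omega)]
    have e1 : 2 * (k + p + 1 + 1) - 2 * (k + 1) = 2 * (p + 1) := by omega
    have e2 : (k + p + 1 + 1) - (k + 1) = p + 1 := by omega
    have e3 : (k + p + 1 + 1) + (k + 1) = 2 * k + p + 3 := by omega
    have e4 : 2 * (k + p + 1) - 2 * k = 2 * (p + 1) := by omega
    have e5 : (k + p + 1) - k = p + 1 := by omega
    have e6 : (k + p + 1) + k = 2 * k + p + 1 := by omega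
    have e7 : 2 * (k + p + 1) - 2 * (k + 1) = 2 * p := by omega
    have e8 : (k + p + 1) - (k + 1) = p := by omega
    have e9 : (k + p + 1) + (k + 1) = 2 * k + p + 2 := by omega
    rw [e1, e2, e3, e4, e5, e6, e7, e8, e9]
    -- combinatorial facts
    have hc1 : (2 * k + p + 2) * Nat.choose (2 * k + p + 1) k
        = Nat.choose (2 * k + p + 2) (k + 1) * (k + 1) := by
      have := Nat.add_one_mul_choose_eq (2 * k + p + 1) k
      simpa [Nat.succ_eq_add_one] using this
    have hc2 : (2 * k + p + 3) * Nat.choose (2 * k + p + 2) (k + 1)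
        = Nat.choose (2 * k + p + 3) (k + 1) * (k + p + 2) := by
      have h1 := Nat.add_one_mul_choose_eq (2 * k + p + 2) (k + p + 1)
      have h2 : Nat.choose (2 * k + p + 2) (k + p + 1) = Nat.choose (2 * k + p + 2) (k + 1) := by
        have := Nat.choose_symm (show k + p + 1 ≤ 2 * k + p + 2 by omega)
        simpa [show 2 * k + p + 2 - (k + p + 1) = k + 1 by omega] using this.symm
      have h3 : Nat.choose (2 * k + p + 3) (k + p + 2) = Nat.choose (2 * k + p + 3) (k + 1) := by
        have := Nat.choose_symm (show k + p + 2 ≤ 2 * k + p + 3 by omega)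
        simpa [show 2 * k + p + 3 - (k + p + 2) = k + 1 by omega] using this.symm
      rw [← h2, ← h3]
      simpa [Nat.succ_eq_add_one] using h1
    have hc3 : (p + 1) * Nat.choose (2 * (p + 1)) (p + 1)
        = 2 * (2 * p + 1) * Nat.choose (2 * p) p := by
      have := Nat.succ_mul_centralBinom_succ p
      simpa [Nat.centralBinom] using this
    have hr1 := congrArg (Nat.cast : ℕ → ℝ) hc1
    have hr2 := congrArg (Nat.cast : ℕ → ℝ) hc2
    have hr3 := congrArg (Nat.cast : ℕ → ℝ) hc3
    push_cast at hr1 hr2 hr3 ⊢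
    have hpow : (2 : ℝ) ^ (k + 1) = 2 * 2 ^ k := by rw [pow_succ]; ring
    rw [hpow]
    linear_combination (-2 * (2 : ℝ) ^ k * ((2 * (p + 1)).choose (p + 1) : ℝ)) * hr2
      + (-4 * (2 : ℝ) ^ k * ((2 * (p + 1)).choose (p + 1) : ℝ)) * hr1
      + (2 * (2 : ℝ) ^ k * ((2 * k + p + 2).choose (k + 1) : ℝ)) * hr3

lemma step (m J j : ℕ) (hj : j ≤ m) (hJj : J ≤ j) :
    ((m : ℝ) + 1) * (qq (m + 1) (j + 1) * (Nat.choose (j + 1) (J + 1) : ℝ))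
      = 4 * ((m : ℝ) + (J : ℝ) + 1) * (qq m j * (Nat.choose j J : ℝ))
        + (4 * ((m : ℝ) + (j : ℝ) + 1) + 4 * ((J : ℝ) + 1)) * (qq m j * (Nat.choose j (J + 1) : ℝ))
        + 2 * (2 * (m : ℝ) - 2 * (j : ℝ) - 1) * (qq m (j + 1) * (Nat.choose (j + 1) (J + 1) : ℝ)) := by
  have hkey := key m j hj
  have hP : ((Nat.choose (j + 1) (J + 1) : ℕ) : ℝ)
      = (Nat.choose j J : ℝ) + (Nat.choose j (J + 1) : ℝ) := by
    rw [Nat.choose_succ_succ]; push_cast; ring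
  have hRn := Nat.choose_succ_right_eq j J
  have hR : (Nat.choose j (J + 1) : ℝ) * ((J : ℝ) + 1)
      = (Nat.choose j J : ℝ) * ((j : ℝ) - (J : ℝ)) := by
    have := congrArg (Nat.cast : ℕ → ℝ) hRn
    push_cast [Nat.cast_sub hJj] at this
    linarith [this]
  calc ((m : ℝ) + 1) * (qq (m + 1) (j + 1) * (Nat.choose (j + 1) (J + 1) : ℝ))
      = (((m : ℝ) + 1) * qq (m + 1) (j + 1)) * (Nat.choose (j + 1) (J + 1) : ℝ) := by ring
    _ = (4 * ((m : ℝ) + (j : ℝ) + 1) * qq m j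
          + 2 * (2 * (m : ℝ) - 2 * (j : ℝ) - 1) * qq m (j + 1))
            * (Nat.choose (j + 1) (J + 1) : ℝ) := by rw [hkey]
    _ = 4 * ((m : ℝ) + (J : ℝ) + 1) * (qq m j * (Nat.choose j J : ℝ))
        + (4 * ((m : ℝ) + (j : ℝ) + 1) + 4 * ((J : ℝ) + 1)) * (qq m j * (Nat.choose j (J + 1) : ℝ))
        + 2 * (2 * (m : ℝ) - 2 * (j : ℝ) - 1) * (qq m (j + 1) * (Nat.choose (j + 1) (J + 1) : ℝ)) := by
          rw [hP]
          linear_combination (-4 * qq m j) * hR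


lemma sum_main (m J : ℕ) (hJ : J ≤ m) :
    ((m : ℝ) + 1) * ∑ k ∈ Finset.Icc (J + 1) (m + 1), qq (m + 1) k * (Nat.choose k (J + 1) : ℝ)
      = 4 * ((m : ℝ) + (J : ℝ) + 1) * ∑ k ∈ Finset.Icc J m, qq m k * (Nat.choose k J : ℝ)
        + 2 * (4 * (m : ℝ) + 2 * (J : ℝ) + 5)
            * ∑ k ∈ Finset.Icc (J + 1) m, qq m k * (Nat.choose k (J + 1) : ℝ) := by
  have hmap : ∑ k ∈ Finset.Icc (J + 1) (m + 1), qq (m + 1) k * (Nat.choose k (J + 1) : ℝ)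
      = ∑ j ∈ Finset.Icc J m, qq (m + 1) (j + 1) * (Nat.choose (j + 1) (J + 1) : ℝ) := by
    rw [← Finset.map_add_right_Icc J m 1, Finset.sum_map]
    simp [addRightEmbedding_apply]
  rw [hmap, Finset.mul_sum]
  have hstep : ∑ j ∈ Finset.Icc J m,
        ((m : ℝ) + 1) * (qq (m + 1) (j + 1) * (Nat.choose (j + 1) (J + 1) : ℝ))
      = ∑ j ∈ Finset.Icc J m,
          (4 * ((m : ℝ) + (J : ℝ) + 1) * (qq m j * (Nat.choose j J : ℝ))
            + (4 * ((m : ℝ) + (j : ℝ) + 1) + 4 * ((J : ℝ) + 1))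
                * (qq m j * (Nat.choose j (J + 1) : ℝ))
            + 2 * (2 * (m : ℝ) - 2 * (j : ℝ) - 1)
                * (qq m (j + 1) * (Nat.choose (j + 1) (J + 1) : ℝ))) := by
    refine Finset.sum_congr rfl fun j hj => ?_
    rw [Finset.mem_Icc] at hj
    exact step m J j hj.2 hj.1
  rw [hstep, Finset.sum_add_distrib, Finset.sum_add_distrib]
  have hT1 : ∑ j ∈ Finset.Icc J m,
        4 * ((m : ℝ) + (J : ℝ) + 1) * (qq m j * (Nat.choose j J : ℝ))
      = 4 * ((m : ℝ) + (J : ℝ) + 1) * ∑ k ∈ Finset.Icc J m, qq m k * (Nat.choose k J : ℝ) := by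
    rw [Finset.mul_sum]
  have hT2 : ∑ j ∈ Finset.Icc J m,
        (4 * ((m : ℝ) + (j : ℝ) + 1) + 4 * ((J : ℝ) + 1)) * (qq m j * (Nat.choose j (J + 1) : ℝ))
      = ∑ j ∈ Finset.Icc (J + 1) m,
          (4 * ((m : ℝ) + (j : ℝ) + 1) + 4 * ((J : ℝ) + 1))
            * (qq m j * (Nat.choose j (J + 1) : ℝ)) := by
    rw [Finset.Icc_eq_cons_Ioc hJ, Finset.sum_cons, Finset.Icc_add_one_left_eq_Ioc]
    simp [Nat.choose_succ_self]
  have hT3 : ∑ j ∈ Finset.Icc J m,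
        2 * (2 * (m : ℝ) - 2 * (j : ℝ) - 1) * (qq m (j + 1) * (Nat.choose (j + 1) (J + 1) : ℝ))
      = ∑ k ∈ Finset.Icc (J + 1) m,
          2 * (2 * (m : ℝ) - 2 * (k : ℝ) + 1) * (qq m k * (Nat.choose k (J + 1) : ℝ)) := by
    have h1 : ∑ j ∈ Finset.Icc J m,
          2 * (2 * (m : ℝ) - 2 * (j : ℝ) - 1) * (qq m (j + 1) * (Nat.choose (j + 1) (J + 1) : ℝ))
        = ∑ k ∈ Finset.Icc (J + 1) (m + 1),
            2 * (2 * (m : ℝ) - 2 * (k : ℝ) + 1) * (qq m k * (Nat.choose k (J + 1) : ℝ)) := by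
      rw [← Finset.map_add_right_Icc J m 1, Finset.sum_map]
      refine Finset.sum_congr rfl fun j _ => ?_
      simp only [addRightEmbedding_apply]
      push_cast; ring
    rw [h1, Finset.sum_Icc_succ_top (by omega : J + 1 ≤ m + 1)]
    simp [qq_top]
  rw [hT1, hT2, hT3]
  have hcomb : (∑ j ∈ Finset.Icc (J + 1) m,
        (4 * ((m : ℝ) + (j : ℝ) + 1) + 4 * ((J : ℝ) + 1))
          * (qq m j * (Nat.choose j (J + 1) : ℝ)))
      + (∑ k ∈ Finset.Icc (J + 1) m,
          2 * (2 * (m : ℝ) - 2 * (k : ℝ) + 1) * (qq m k * (Nat.choose k (J + 1) : ℝ)))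
      = 2 * (4 * (m : ℝ) + 2 * (J : ℝ) + 5)
          * ∑ k ∈ Finset.Icc (J + 1) m, qq m k * (Nat.choose k (J + 1) : ℝ) := by
    rw [← Finset.sum_add_distrib, Finset.mul_sum]
    refine Finset.sum_congr rfl fun k _ => ?_
    ring
  linear_combination hcomb

lemma sum_zero (m : ℕ) :
    ((m : ℝ) + 1) * ∑ k ∈ Finset.Icc 0 (m + 1), qq (m + 1) k * (Nat.choose k 0 : ℝ)
      = 2 * (4 * (m : ℝ) + 3) * ∑ k ∈ Finset.Icc 0 m, qq m k * (Nat.choose k 0 : ℝ) := by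
  simp only [Nat.choose_zero_right, Nat.cast_one, mul_one]
  have hsplit : ∑ k ∈ Finset.Icc 0 (m + 1), qq (m + 1) k
      = qq (m + 1) 0 + ∑ j ∈ Finset.Icc 0 m, qq (m + 1) (j + 1) := by
    rw [Finset.Icc_eq_cons_Ioc (Nat.zero_le (m + 1)), Finset.sum_cons, ← Finset.Icc_add_one_left_eq_Ioc,
      ← Finset.map_add_right_Icc 0 m 1, Finset.sum_map]
    simp [addRightEmbedding_apply]
  rw [hsplit, mul_add, Finset.mul_sum]
  have hstep : ∑ j ∈ Finset.Icc 0 m, ((m : ℝ) + 1) * qq (m + 1) (j + 1)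
      = ∑ j ∈ Finset.Icc 0 m,
          (4 * ((m : ℝ) + (j : ℝ) + 1) * qq m j
            + 2 * (2 * (m : ℝ) - 2 * (j : ℝ) - 1) * qq m (j + 1)) := by
    refine Finset.sum_congr rfl fun j hj => ?_
    rw [Finset.mem_Icc] at hj
    exact key m j hj.2
  rw [hstep, Finset.sum_add_distrib]
  have hT3 : ∑ j ∈ Finset.Icc 0 m, 2 * (2 * (m : ℝ) - 2 * (j : ℝ) - 1) * qq m (j + 1)
      = (∑ k ∈ Finset.Icc 0 m, 2 * (2 * (m : ℝ) - 2 * (k : ℝ) + 1) * qq m k)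
          - 2 * (2 * (m : ℝ) + 1) * qq m 0 := by
    have h1 : ∑ j ∈ Finset.Icc 0 m, 2 * (2 * (m : ℝ) - 2 * (j : ℝ) - 1) * qq m (j + 1)
        = ∑ k ∈ Finset.Icc (0 + 1) (m + 1), 2 * (2 * (m : ℝ) - 2 * (k : ℝ) + 1) * qq m k := by
      rw [← Finset.map_add_right_Icc 0 m 1, Finset.sum_map]
      refine Finset.sum_congr rfl fun j _ => ?_
      simp only [addRightEmbedding_apply]
      push_cast; ring
    have h2 : ∑ k ∈ Finset.Icc (0 + 1) (m + 1), 2 * (2 * (m : ℝ) - 2 * (k : ℝ) + 1) * qq m k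
        = ∑ k ∈ Finset.Icc 1 m, 2 * (2 * (m : ℝ) - 2 * (k : ℝ) + 1) * qq m k := by
      rw [show (0 + 1) = 1 from rfl, Finset.sum_Icc_succ_top (by omega : 1 ≤ m + 1)]
      simp [qq_top]
    have h3 : ∑ k ∈ Finset.Icc 0 m, 2 * (2 * (m : ℝ) - 2 * (k : ℝ) + 1) * qq m k
        = 2 * (2 * (m : ℝ) + 1) * qq m 0
          + ∑ k ∈ Finset.Icc 1 m, 2 * (2 * (m : ℝ) - 2 * (k : ℝ) + 1) * qq m k := by
      rw [Finset.Icc_eq_cons_Ioc (Nat.zero_le m), Finset.sum_cons, ← Finset.Icc_add_one_left_eq_Ioc]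
      norm_num
    rw [h1, h2, h3]; ring
  rw [hT3]
  have hcomb : (∑ j ∈ Finset.Icc 0 m, 4 * ((m : ℝ) + (j : ℝ) + 1) * qq m j)
      + (∑ k ∈ Finset.Icc 0 m, 2 * (2 * (m : ℝ) - 2 * (k : ℝ) + 1) * qq m k)
      = 2 * (4 * (m : ℝ) + 3) * ∑ k ∈ Finset.Icc 0 m, qq m k := by
    rw [← Finset.sum_add_distrib, Finset.mul_sum]
    refine Finset.sum_congr rfl fun k _ => ?_
    ring
  have hcen := central m
  linear_combination hcomb + hcen

theorem boros_moll_recu1 (m : ℕ) (i : ℤ) (h0 : 0 ≤ i) (h1 : i ≤ (m : ℤ) + 1) :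
    d (m + 1) i = ((m + i : ℝ) / (m + 1)) * d m (i - 1)
      + ((4 * m + 2 * i + 3 : ℝ) / (2 * (m + 1))) * d m i := by
  lift i to ℕ using h0 with I
  have hIm : I ≤ m + 1 := by exact_mod_cast h1
  rcases Nat.eq_zero_or_pos I with rfl | hI
  · -- I = 0
    have hne : d m ((0 : ℕ) - 1 : ℤ) = 0 := by
      rw [d, if_neg (by norm_num)]
    push_cast at hne ⊢
    rw [hne, mul_zero, zero_add]
    have hd1 := d_eq (m + 1) 0
    have hd2 := d_eq m 0
    push_cast at hd1 hd2
    rw [hd1, hd2]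
    have hs := sum_zero m
    simp only [Nat.choose_zero_right, Nat.cast_one, mul_one] at hs hd1 hd2 ⊢
    have hp : (2 : ℝ) ^ (2 * (m + 1)) = 4 * 2 ^ (2 * m) := by
      rw [show 2 * (m + 1) = 2 * m + 2 by ring, pow_add]; ring
    have hp0 : (2 : ℝ) ^ (2 * m) ≠ 0 := by positivity
    have hm0 : (m : ℝ) + 1 ≠ 0 := by positivity
    rw [hp]
    field_simp
    linear_combination 2 * hs
  · -- I ≥ 1
    obtain ⟨J, rfl⟩ : ∃ J, I = J + 1 := ⟨I - 1, by omega⟩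
    have hJ : J ≤ m := by omega
    have hi1 : ((J + 1 : ℕ) : ℤ) - 1 = ((J : ℕ) : ℤ) := by push_cast; ring
    rw [hi1]
    have hd1 := d_eq (m + 1) (J + 1)
    have hd2 := d_eq m J
    have hd3 := d_eq m (J + 1)
    push_cast at hd1 hd2 hd3 ⊢
    rw [hd1, hd2, hd3]
    have hs := sum_main m J hJ
    have hp : (2 : ℝ) ^ (2 * (m + 1)) = 4 * 2 ^ (2 * m) := by
      rw [show 2 * (m + 1) = 2 * m + 2 by ring, pow_add]; ring
    have hp0 : (2 : ℝ) ^ (2 * m) ≠ 0 := by positivity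
    have hm0 : (m : ℝ) + 1 ≠ 0 := by positivity
    rw [hp]
    field_simp
    linear_combination 2 * hs
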